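/- Failure of additivity for untwisted B₃: in the root system B₃ ⊂ ℝ³, let ω₁ = ε₁, ω₃ = (ε₁+ε₂+ε₃)/2, and w₀ = −id. Then n(ω₁, w₀) = 2, n(ω₃, w₀) = 2, but n(ω₁ + ω₃, w₀) = 3; that is, the minimal number of positive roots of B₃ summing to (2,0,0) is 2, to (1,1,1) is 2, and to (3,1,1) is 3. In particular, n(λ+μ, w₀) < n(λ,w₀) + n(μ,w₀) for the dominant weights λ = ω₁, μ = ω₃. -/

import Mathlib

/-- The positive roots of type `B₃` in `ℝ³`: the vectors `ε_i` and
`ε_i - ε_j`, `ε_i + ε_j` for `i < j`. -/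
def b3PositiveRoots : Set (Fin 3 → ℝ) :=
  {v | (∃ i : Fin 3, v = Pi.single i 1) ∨
    ∃ i j : Fin 3, i < j ∧
      (v = Pi.single i 1 - Pi.single j 1 ∨ v = Pi.single i 1 + Pi.single j 1)}

/-- The set of lengths of decompositions of `v` into a sum of positive roots of
`B₃` (with repetitions). -/
def b3DecompLengths (v : Fin 3 → ℝ) : Set ℕ :=
  {N | ∃ l : List (Fin 3 → ℝ),
    (∀ u ∈ l, u ∈ b3PositiveRoots) ∧ l.sum = v ∧ l.length = N}

lemma b3_root_coordSum_le {u : Fin 3 → ℝ} (hu : u ∈ b3PositiveRoots) :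
    u 0 + u 1 + u 2 ≤ 2 := by
  rcases hu with ⟨i, rfl⟩ | ⟨i, j, hij, rfl | rfl⟩
  · fin_cases i <;> norm_num [Pi.single_apply, Fin.ext_iff]
  all_goals fin_cases i <;> fin_cases j <;> simp_all [Pi.single_apply] <;> norm_num

lemma b3_root_coord0_le {u : Fin 3 → ℝ} (hu : u ∈ b3PositiveRoots) :
    u 0 ≤ 1 := by
  rcases hu with ⟨i, rfl⟩ | ⟨i, j, hij, rfl | rfl⟩
  · fin_cases i <;> norm_num [Pi.single_apply, Fin.ext_iff]
  all_goals fin_cases i <;> fin_cases j <;> simp_all [Pi.single_apply] <;> norm_num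

lemma b3_list_coordSum_le (l : List (Fin 3 → ℝ)) (h : ∀ u ∈ l, u ∈ b3PositiveRoots) :
    l.sum 0 + l.sum 1 + l.sum 2 ≤ 2 * l.length := by
  induction l with
  | nil => simp
  | cons a t ih =>
    have ha := b3_root_coordSum_le (h a (by simp))
    have ht := ih (fun u hu => h u (by simp [hu]))
    simp only [List.sum_cons, Pi.add_apply, List.length_cons]
    push_cast
    linarith

lemma b3_list_coord0_le (l : List (Fin 3 → ℝ)) (h : ∀ u ∈ l, u ∈ b3PositiveRoots) :
    l.sum 0 ≤ l.length := by
  induction l with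
  | nil => simp
  | cons a t ih =>
    have ha := b3_root_coord0_le (h a (by simp))
    have ht := ih (fun u hu => h u (by simp [hu]))
    simp only [List.sum_cons, Pi.add_apply, List.length_cons]
    push_cast
    linarith

theorem b3_additivity_failure :
    IsLeast (b3DecompLengths ![2, 0, 0]) 2 ∧
    IsLeast (b3DecompLengths ![1, 1, 1]) 2 ∧
    IsLeast (b3DecompLengths ![3, 1, 1]) 3 := by
  refine ⟨⟨⟨[Pi.single 0 1, Pi.single 0 1], ?_, ?_, rfl⟩, ?_⟩,
         ⟨⟨[Pi.single 0 1 + Pi.single 1 1, Pi.single 2 1], ?_, ?_, rfl⟩, ?_⟩,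
         ⟨⟨[Pi.single 0 1, Pi.single 0 1 + Pi.single 1 1, Pi.single 0 1 + Pi.single 2 1],
            ?_, ?_, rfl⟩, ?_⟩⟩
  · intro u hu
    simp only [List.mem_cons, List.not_mem_nil, or_false] at hu
    rcases hu with rfl | rfl <;> exact Or.inl ⟨0, rfl⟩
  · funext x; fin_cases x <;> simp [Pi.single_apply] <;> norm_num
  · rintro N ⟨l, hl, hsum, rfl⟩
    have h0 := b3_list_coord0_le l hl
    rw [hsum] at h0
    norm_num at h0
    exact_mod_cast h0
  · intro u hu
    simp only [List.mem_cons, List.not_mem_nil, or_false] at hu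
    rcases hu with rfl | rfl
    · exact Or.inr ⟨0, 1, by decide, Or.inr rfl⟩
    · exact Or.inl ⟨2, rfl⟩
  · funext x; fin_cases x <;> simp [Pi.single_apply] <;> norm_num
  · rintro N ⟨l, hl, hsum, rfl⟩
    have hS := b3_list_coordSum_le l hl
    rw [hsum] at hS
    norm_num at hS
    have : (3 : ℝ) ≤ 2 * l.length := by linarith [show (![1, 1, 1] : Fin 3 → ℝ) 2 = 1 from rfl]
    have h2 : (3 : ℕ) ≤ 2 * l.length := by exact_mod_cast this
    omega
  · intro u hu
    simp only [List.mem_cons, List.not_mem_nil, or_false] at hu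
    rcases hu with rfl | rfl | rfl
    · exact Or.inl ⟨0, rfl⟩
    · exact Or.inr ⟨0, 1, by decide, Or.inr rfl⟩
    · exact Or.inr ⟨0, 2, by decide, Or.inr rfl⟩
  · funext x; fin_cases x <;> simp [Pi.single_apply] <;> norm_num
  · rintro N ⟨l, hl, hsum, rfl⟩
    have hS := b3_list_coordSum_le l hl
    rw [hsum] at hS
    norm_num at hS
    have : (5 : ℝ) ≤ 2 * l.length := by linarith [show (![3, 1, 1] : Fin 3 → ℝ) 2 = 1 from rfl]
    have h2 : (5 : ℕ) ≤ 2 * l.length := by exact_mod_cast this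
    omega
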